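/- Let I be an ideal of k[x₁,…,x_n], u ∈ ℝ^n with all u_i < 0, and Ô = k[[x]]. Then in_u(Ô·I) = in_u(I) in k[x]. More precisely, for every P ∈ Ô·I, written P = Σ_j c_j(x) P_j with c_j ∈ k[[x]] and P_j ∈ I, the initial form in_u(P) lies in the ideal of k[x] generated by {in_u(f) | f ∈ I, f ≠ 0}. -/

import Mathlib

open scoped Classical

noncomputable section

/-- The `u`-weight of an exponent vector. -/
def wtR {n : ℕ} (u : Fin n → ℝ) (α : Fin n →₀ ℕ) : ℝ := ∑ i, u i * (α i : ℝ)

/-- `g` is the initial form `in_u(f)` of the nonzero power series `f`. -/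
def IsInit {n : ℕ} (K : Type*) [Field K] (u : Fin n → ℝ)
    (f : MvPowerSeries (Fin n) K) (g : MvPolynomial (Fin n) K) : Prop :=
  f ≠ 0 ∧ ∃ c : ℝ,
    (∃ α, MvPowerSeries.coeff α f ≠ 0 ∧ wtR u α = c) ∧
    (∀ α, MvPowerSeries.coeff α f ≠ 0 → wtR u α ≤ c) ∧
    (∀ α, MvPolynomial.coeff α g =
      if wtR u α = c then MvPowerSeries.coeff α f else 0)


lemma wtR_nonpos {n : ℕ} {u : Fin n → ℝ} (hu : ∀ i, u i < 0) (α : Fin n →₀ ℕ) :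
    wtR u α ≤ 0 :=
  Finset.sum_nonpos fun i _ => mul_nonpos_of_nonpos_of_nonneg (hu i).le (Nat.cast_nonneg _)

lemma wtR_add {n : ℕ} (u : Fin n → ℝ) (α β : Fin n →₀ ℕ) :
    wtR u (α + β) = wtR u α + wtR u β := by
  simp [wtR, Finsupp.add_apply, mul_add, Finset.sum_add_distrib]

lemma exists_bound {n : ℕ} (u : Fin n → ℝ) (hu : ∀ i, u i < 0) (b : ℝ) :
    ∃ B : Fin n →₀ ℕ, ∀ α, b ≤ wtR u α → α ≤ B := by
  refine ⟨Finsupp.equivFunOnFinite.symm fun i => ⌈b / u i⌉₊, fun α hα => ?_⟩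
  rw [Finsupp.le_def]
  intro i
  have h1 : wtR u α ≤ u i * (α i : ℝ) := by
    have h2 : u i * (α i : ℝ) + ∑ j ∈ Finset.univ.erase i, u j * (α j : ℝ) = wtR u α :=
      Finset.add_sum_erase Finset.univ (fun j => u j * (α j : ℝ)) (Finset.mem_univ i)
    have h3 : ∑ j ∈ Finset.univ.erase i, u j * (α j : ℝ) ≤ 0 :=
      Finset.sum_nonpos fun j _ => mul_nonpos_of_nonpos_of_nonneg (hu j).le (Nat.cast_nonneg _)
    linarith
  have h4 : (α i : ℝ) ≤ b / u i := (le_div_iff_of_neg (hu i)).mpr (by linarith [mul_comm (u i) ((α i : ℝ))] )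
  have h5 : α i ≤ ⌈b / u i⌉₊ := by
    calc α i = ⌈((α i : ℕ) : ℝ)⌉₊ := by rw [Nat.ceil_natCast]
    _ ≤ ⌈b / u i⌉₊ := Nat.ceil_mono h4
  simpa using h5

lemma initial_key {n : ℕ} {K : Type*} [Field K]
    (I : Ideal (MvPolynomial (Fin n) K)) (u : Fin n → ℝ) (hu : ∀ i, u i < 0)
    (P : MvPowerSeries (Fin n) K)
    (hP : P ∈ Ideal.span
      ((fun f : MvPolynomial (Fin n) K => (f : MvPowerSeries (Fin n) K)) '' I))
    (g : MvPolynomial (Fin n) K)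
    (hg : IsInit K u P g) :
    ∃ f ∈ I, IsInit K u (f : MvPowerSeries (Fin n) K) g := by
  obtain ⟨d, hd_supp, hsum⟩ := Submodule.mem_span_set.mp hP
  obtain ⟨hP0, w, ⟨α₀, hα₀, hwα₀⟩, hmax, hgc⟩ := hg
  obtain ⟨B, hB⟩ := exists_bound u hu w
  set T : Finset (Fin n →₀ ℕ) := (Finset.Iic B).filter (fun β => w ≤ wtR u β) with hT
  have hTmem : ∀ β, β ∈ T ↔ w ≤ wtR u β := by
    intro β
    constructor
    · intro h; exact (Finset.mem_filter.mp h).2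
    · intro h; exact Finset.mem_filter.mpr ⟨Finset.mem_Iic.mpr (hB β h), h⟩
  have hex : ∀ s ∈ d.support, ∃ f, f ∈ I ∧ (f : MvPowerSeries (Fin n) K) = s := by
    intro s hs
    obtain ⟨f, hfI, hfe⟩ := hd_supp hs
    exact ⟨f, hfI, hfe⟩
  choose F hFI hFeq using hex
  set p : MvPowerSeries (Fin n) K → MvPolynomial (Fin n) K :=
    fun s => ∑ β ∈ T, MvPolynomial.monomial β (MvPowerSeries.coeff β (d s)) with hp
  set Q : MvPolynomial (Fin n) K := ∑ s ∈ d.support.attach, p s.1 * F s.1 s.2 with hQdef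
  have hQI : Q ∈ I := Ideal.sum_mem _ fun s _ => I.mul_mem_left _ (hFI s.1 s.2)
  have hpcoeff : ∀ s β, MvPolynomial.coeff β (p s) =
      if w ≤ wtR u β then MvPowerSeries.coeff β (d s) else 0 := by
    intro s β
    simp only [hp, MvPolynomial.coeff_sum, MvPolynomial.coeff_monomial,
      Finset.sum_ite_eq' T β, hTmem]
  -- coefficients agree in weight ≥ w
  have hkey : ∀ α, w ≤ wtR u α →
      MvPowerSeries.coeff α (Q : MvPowerSeries (Fin n) K) = MvPowerSeries.coeff α P := by
    intro α hα
    have hQcoe : (Q : MvPowerSeries (Fin n) K)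
        = ∑ s ∈ d.support.attach, ((p s.1 : MvPowerSeries (Fin n) K) * (s.1 : MvPowerSeries (Fin n) K)) := by
      rw [hQdef]
      have h := map_sum (MvPolynomial.coeToMvPowerSeries.ringHom (σ := Fin n) (R := K))
        (fun s : {x // x ∈ d.support} => p s.1 * F s.1 s.2) d.support.attach
      simp only [MvPolynomial.coeToMvPowerSeries.ringHom_apply] at h
      rw [h]
      refine Finset.sum_congr rfl fun s _ => ?_
      rw [MvPolynomial.coe_mul, hFeq s.1 s.2]
    have hPeq : P = ∑ s ∈ d.support, d s * s := by
      rw [← hsum]; rfl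
    rw [hQcoe, hPeq, map_sum, map_sum, Finset.sum_attach d.support
      (fun s => MvPowerSeries.coeff α ((p s : MvPowerSeries (Fin n) K) * s))]
    refine Finset.sum_congr rfl fun s _ => ?_
    rw [MvPowerSeries.coeff_mul, MvPowerSeries.coeff_mul]
    refine Finset.sum_congr rfl fun q hq => ?_
    have hq' : q.1 + q.2 = α := Finset.HasAntidiagonal.mem_antidiagonal.mp hq
    have hw1 : w ≤ wtR u q.1 := by
      have := wtR_add u q.1 q.2
      rw [hq'] at this
      have := wtR_nonpos hu q.2
      linarith
    rw [MvPolynomial.coeff_coe, hpcoeff, if_pos hw1]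
  refine ⟨Q, hQI, ?_, w, ⟨α₀, ?_, hwα₀⟩, ?_, ?_⟩
  · intro h0
    apply hα₀
    rw [← hkey α₀ hwα₀.ge, h0, map_zero]
  · rw [hkey α₀ hwα₀.ge]; exact hα₀
  · intro α hc
    by_contra hlt
    push_neg at hlt
    rw [hkey α hlt.le] at hc
    exact absurd (hmax α hc) (not_le.mpr hlt)
  · intro α
    rw [hgc α]
    split_ifs with h
    · rw [hkey α h.ge]
    · rfl

/-- For an ideal `I ⊆ k[x]` and `u` with all components strictly negative,
`in_u(Ô·I) = in_u(I)` in `k[x]`, where `Ô = k[[x]]`.  More precisely, the initial form of any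
`P ∈ Ô·I` lies in the ideal of `k[x]` generated by the initial forms of elements of `I`. -/
theorem initial_ideal_formal_completion {n : ℕ} {K : Type*} [Field K]
    (I : Ideal (MvPolynomial (Fin n) K)) (u : Fin n → ℝ) (hu : ∀ i, u i < 0) :
    (Ideal.span {g : MvPolynomial (Fin n) K |
        ∃ P ∈ Ideal.span
          ((fun f : MvPolynomial (Fin n) K => (f : MvPowerSeries (Fin n) K)) '' I),
          IsInit K u P g} =
      Ideal.span {g : MvPolynomial (Fin n) K |
        ∃ f ∈ I, IsInit K u (f : MvPowerSeries (Fin n) K) g}) ∧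
    ∀ P ∈ Ideal.span
        ((fun f : MvPolynomial (Fin n) K => (f : MvPowerSeries (Fin n) K)) '' I),
      ∀ g : MvPolynomial (Fin n) K, IsInit K u P g →
        g ∈ Ideal.span {g' : MvPolynomial (Fin n) K |
          ∃ f ∈ I, IsInit K u (f : MvPowerSeries (Fin n) K) g'} := by
  have part2 : ∀ P ∈ Ideal.span
      ((fun f : MvPolynomial (Fin n) K => (f : MvPowerSeries (Fin n) K)) '' I),
      ∀ g : MvPolynomial (Fin n) K, IsInit K u P g →
        g ∈ Ideal.span {g' : MvPolynomial (Fin n) K |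
          ∃ f ∈ I, IsInit K u (f : MvPowerSeries (Fin n) K) g'} := by
    intro P hP g hg
    obtain ⟨f, hfI, hf⟩ := initial_key I u hu P hP g hg
    exact Ideal.subset_span ⟨f, hfI, hf⟩
  refine ⟨le_antisymm ?_ (Ideal.span_mono ?_), part2⟩
  · rw [Ideal.span_le]
    rintro g ⟨P, hP, hPg⟩
    exact part2 P hP g hPg
  · rintro g ⟨f, hfI, hf⟩
    exact ⟨(f : MvPowerSeries (Fin n) K), Ideal.subset_span ⟨f, hfI, rfl⟩, hf⟩
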